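/- For the set disjointness problem f with parameters m ≤ n < N/2 and any integer u with n ≤ u ≤ N: if A ⊆ X and B ⊆ Y satisfy f(x,y) = 1 for all (x,y) ∈ A × B and |B| ≥ binom(u,n), then |A| ≤ binom(N−u, m). -/
import Mathlib


/-- `f` has `(s,w,t)`-certificates: there is a code `T : Y → Σ^s` with alphabet
`Σ = {0,1}^w` such that for every query `x` and database `y` some set `P` of at
most `t` cells determines the answer `f (x, y)`. -/
def HasCertificates {X Y Z : Type*} (f : X × Y → Z) (s w t : ℕ) : Prop :=
  ∃ T : Y → Fin s → (Fin w → Bool),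
    ∀ x : X, ∀ y : Y, ∃ P : Finset (Fin s), P.card ≤ t ∧
      ∀ y' : Y, (∀ i ∈ P, T y' i = T y i) → f (x, y') = f (x, y)

/-- The set disjointness problem on universe `{1,…,N}` with parameters `m, n`: queries are
`m`-element subsets, databases are `n`-element subsets, and the answer is `1` iff the two
sets are disjoint. -/
def setDisj (N m n : ℕ) :
    {x : Finset (Fin N) // x.card = m} × {y : Finset (Fin N) // y.card = n} → Fin 2 :=
  fun p => if Disjoint p.1.val p.2.val then 1 else 0

lemma choose_strict_mono_aux {n a b : ℕ} (hn : 1 ≤ n) (hna : n ≤ a) (hab : a < b) :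
    a.choose n < b.choose n := by
  induction b with
  | zero => omega
  | succ b ih =>
    rcases Nat.lt_or_ge a b with h | h
    · exact lt_of_lt_of_le (ih h) (Nat.choose_le_choose n (Nat.le_succ b))
    · have hab' : a = b := by omega
      subst hab'
      obtain ⟨k, rfl⟩ : ∃ k, n = k + 1 := ⟨n - 1, by omega⟩
      rw [Nat.choose_succ_succ]
      have := Nat.choose_pos (show k ≤ a by omega)
      simp only [Nat.succ_eq_add_one] at *
      omega

/-- For set disjointness with `m ≤ n < N/2` and any `n ≤ u ≤ N`: any monochromatic
1-rectangle `A × B` with `|B| ≥ C(u,n)` has `|A| ≤ C(N−u, m)`. -/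
theorem setDisj_rectangle_bound (N m n u : ℕ) (hmn : m ≤ n) (hnN : 2 * n < N)
    (hnu : n ≤ u) (huN : u ≤ N)
    (A : Finset {x : Finset (Fin N) // x.card = m})
    (B : Finset {y : Finset (Fin N) // y.card = n})
    (hone : ∀ x ∈ A, ∀ y ∈ B, setDisj N m n (x, y) = 1)
    (hB : u.choose n ≤ B.card) :
    A.card ≤ (N - u).choose m := by
  rcases Nat.eq_zero_or_pos n with hn0 | hn1
  · have hm0 : m = 0 := by omega
    subst hm0
    have hsub : A ⊆ {⟨∅, Finset.card_empty⟩} := by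
      intro x hx
      simp only [Finset.mem_singleton]
      exact Subtype.ext (Finset.card_eq_zero.mp x.2)
    calc A.card ≤ 1 := by simpa using Finset.card_le_card hsub
    _ = (N - u).choose 0 := (Nat.choose_zero_right _).symm
  · have hBne : B.Nonempty := Finset.card_pos.mp (lt_of_lt_of_le (Nat.choose_pos hnu) hB)
    set U : Finset (Fin N) := B.sup (fun y => y.1) with hU
    have hyU : ∀ y ∈ B, y.1 ⊆ U := fun y hy => Finset.le_sup hy
    have hnU : n ≤ U.card := by
      obtain ⟨y, hy⟩ := hBne
      calc n = y.1.card := y.2.symm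
      _ ≤ U.card := Finset.card_le_card (hyU y hy)
    have hcard : B.card ≤ U.card.choose n := by
      have h1 : B.card = (B.image (fun y => y.1)).card :=
        (Finset.card_image_of_injective _ Subtype.val_injective).symm
      rw [h1]
      have hsub : B.image (fun y => y.1) ⊆ U.powersetCard n := by
        intro s hs
        simp only [Finset.mem_image] at hs
        obtain ⟨y, hy, rfl⟩ := hs
        exact Finset.mem_powersetCard.mpr ⟨hyU y hy, y.2⟩
      calc _ ≤ (U.powersetCard n).card := Finset.card_le_card hsub
      _ = U.card.choose n := Finset.card_powersetCard n U
    have huU : u ≤ U.card := by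
      by_contra h
      push_neg at h
      have := choose_strict_mono_aux hn1 hnU h
      omega
    have hxU : ∀ x ∈ A, x.1 ⊆ Uᶜ := by
      intro x hx a ha
      rw [Finset.mem_compl]
      intro haU
      rw [hU, Finset.mem_sup] at haU
      obtain ⟨y, hy, hay⟩ := haU
      have h1 := hone x hx y hy
      by_cases hd : Disjoint x.1 y.1
      · exact Finset.disjoint_left.mp hd ha hay
      · simp [setDisj, hd] at h1
    have hA : A.card ≤ ((Uᶜ : Finset (Fin N)).card).choose m := by
      have h1 : A.card = (A.image (fun x => x.1)).card :=
        (Finset.card_image_of_injective _ Subtype.val_injective).symm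
      rw [h1]
      have hsub : A.image (fun x => x.1) ⊆ (Uᶜ).powersetCard m := by
        intro s hs
        simp only [Finset.mem_image] at hs
        obtain ⟨x, hx, rfl⟩ := hs
        exact Finset.mem_powersetCard.mpr ⟨hxU x hx, x.2⟩
      calc _ ≤ ((Uᶜ).powersetCard m).card := Finset.card_le_card hsub
      _ = _ := Finset.card_powersetCard m _
    have hc : (Uᶜ : Finset (Fin N)).card = N - U.card := by
      rw [Finset.card_compl]
      simp
    have hUN : U.card ≤ N := le_trans (Finset.card_le_card (Finset.subset_univ U)) (by simp)
    calc A.card ≤ ((Uᶜ : Finset (Fin N)).card).choose m := hA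
    _ ≤ (N - u).choose m := by
        rw [hc]; exact Nat.choose_le_choose m (by omega)
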